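/- For any a < x < b, any a ≤ t₀ ≤ t₁ ≤ b, and functions f, u : [a,b] → ℝ for which all the Riemann–Stieltjes integrals below exist, the identity ∫ₐ^{t₀} [u(s) − u(a)] df(s) + ∫_{t₀}^{t₁} [u(s) − u(x)] df(s) + ∫_{t₁}^{b} [u(s) − u(b)] df(s) = [u(x) − u(a)]·f(t₀) + [u(b) − u(x)]·f(t₁) − ∫ₐᵇ f(s) du(s) holds. -/

import Mathlib

/-- A tagged partition of the interval `[a, b]`. -/
structure TaggedPartition (a b : ℝ) where
  n : ℕ
  pts : ℕ → ℝ
  tag : ℕ → ℝ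
  mono : ∀ i, pts i ≤ pts (i + 1)
  first : pts 0 = a
  last : pts n = b
  tag_mem : ∀ i, pts i ≤ tag i ∧ tag i ≤ pts (i + 1)

/-- The Riemann–Stieltjes sum of `f` with respect to `u` over a tagged partition. -/
def RSsum (f u : ℝ → ℝ) {a b : ℝ} (P : TaggedPartition a b) : ℝ :=
  ∑ i ∈ Finset.range P.n, f (P.tag i) * (u (P.pts (i + 1)) - u (P.pts i))

/-- `IsRSIntegral f u a b I` means the Riemann–Stieltjes integral `∫ₐᵇ f du` exists
and equals `I`: Riemann–Stieltjes sums converge to `I` as the mesh tends to `0`. -/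
def IsRSIntegral (f u : ℝ → ℝ) (a b I : ℝ) : Prop :=
  ∀ ε > 0, ∃ δ > 0, ∀ P : TaggedPartition a b,
    (∀ i < P.n, P.pts (i + 1) - P.pts i < δ) → |RSsum f u P - I| < ε

/-- The total (Jordan) variation of `u` on `[a, b]`. -/
noncomputable def totalVar (u : ℝ → ℝ) (a b : ℝ) : ℝ :=
  (eVariationOn u (Set.Icc a b)).toReal

namespace TaggedPartition

lemma pts_mono {a b : ℝ} (P : TaggedPartition a b) : Monotone P.pts :=
  monotone_nat_of_le_succ P.mono

lemma endpoints_le {a b : ℝ} (P : TaggedPartition a b) : a ≤ b := by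
  have := P.pts_mono (Nat.zero_le P.n)
  rwa [P.first, P.last] at this

/-- Concatenation of partitions. -/
def concat {a b c : ℝ} (P : TaggedPartition a b) (Q : TaggedPartition b c) :
    TaggedPartition a c where
  n := P.n + Q.n
  pts := fun i => if i < P.n then P.pts i else Q.pts (i - P.n)
  tag := fun i => if i < P.n then P.tag i else Q.tag (i - P.n)
  mono := by
    intro i
    by_cases h2 : i < P.n
    · by_cases h : i + 1 < P.n
      · simp only [h, h2, if_true]; exact P.mono i
      · have he : Q.pts (i + 1 - P.n) = P.pts P.n := by
          have : i + 1 - P.n = 0 := by omega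
          rw [this, Q.first, P.last]
        rw [if_pos h2, if_neg h, he]
        exact P.pts_mono (by omega)
    · have h : ¬ (i + 1 < P.n) := by omega
      have e : i + 1 - P.n = (i - P.n) + 1 := by omega
      rw [if_neg h, if_neg h2, e]
      exact Q.mono _
  first := by
    by_cases h : 0 < P.n
    · simp [h, P.first]
    · have h0 : P.n = 0 := by omega
      have hab : P.pts 0 = b := by rw [← h0]; exact P.last
      rw [if_neg h, h0, Nat.sub_zero, Q.first, ← hab, P.first]
  last := by
    have h : ¬ (P.n + Q.n < P.n) := by omega
    simp [h, Q.last]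
  tag_mem := by
    intro i
    by_cases h2 : i < P.n
    · by_cases h : i + 1 < P.n
      · simp only [h, h2, if_true]; exact P.tag_mem i
      · have he : Q.pts (i + 1 - P.n) = P.pts (i + 1) := by
          have e0 : i + 1 - P.n = 0 := by omega
          have e1 : i + 1 = P.n := by omega
          rw [e0, Q.first, e1, P.last]
        rw [if_pos h2, if_pos h2, if_neg h, he]
        exact P.tag_mem i
    · have h : ¬ (i + 1 < P.n) := by omega
      have e : i + 1 - P.n = (i - P.n) + 1 := by omega
      rw [if_neg h, if_neg h2, if_neg h2, e]
      exact Q.tag_mem _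

lemma RSsum_concat (f u : ℝ → ℝ) {a b c : ℝ} (P : TaggedPartition a b)
    (Q : TaggedPartition b c) :
    RSsum f u (P.concat Q) = RSsum f u P + RSsum f u Q := by
  unfold RSsum concat
  simp only
  rw [Finset.sum_range_add]
  congr 1
  · refine Finset.sum_congr rfl fun i hi => ?_
    have h2 : i < P.n := Finset.mem_range.1 hi
    by_cases h : i + 1 < P.n
    · simp [h, h2]
    · have he : Q.pts (i + 1 - P.n) = P.pts (i + 1) := by
        have e0 : i + 1 - P.n = 0 := by omega
        have e1 : i + 1 = P.n := by omega
        rw [e0, Q.first, e1, P.last]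
      rw [if_pos h2, if_pos h2, if_neg h, he]
  · refine Finset.sum_congr rfl fun j hj => ?_
    have h1 : ¬ (P.n + j < P.n) := by omega
    have h2 : ¬ (P.n + j + 1 < P.n) := by omega
    have e1 : P.n + j - P.n = j := by omega
    have e2 : P.n + j + 1 - P.n = j + 1 := by omega
    rw [if_neg h1, if_neg h1, if_neg h2, e1, e2]

lemma concat_mesh {a b c : ℝ} (P : TaggedPartition a b) (Q : TaggedPartition b c) {δ : ℝ}
    (hP : ∀ i < P.n, P.pts (i + 1) - P.pts i < δ)
    (hQ : ∀ i < Q.n, Q.pts (i + 1) - Q.pts i < δ) :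
    ∀ i < (P.concat Q).n, (P.concat Q).pts (i + 1) - (P.concat Q).pts i < δ := by
  intro i hi
  simp only [concat] at hi ⊢
  by_cases h2 : i < P.n
  · by_cases h : i + 1 < P.n
    · simp only [h, h2, if_true]; exact hP i h2
    · have he : Q.pts (i + 1 - P.n) = P.pts (i + 1) := by
        have e0 : i + 1 - P.n = 0 := by omega
        have e1 : i + 1 = P.n := by omega
        rw [e0, Q.first, e1, P.last]
      rw [if_pos h2, if_neg h, he]
      exact hP i h2
  · have h : ¬ (i + 1 < P.n) := by omega
    have e : i + 1 - P.n = (i - P.n) + 1 := by omega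
    rw [if_neg h, if_neg h2, e]
    exact hQ _ (by omega)


/-- The dual partition: points and tags are swapped. -/
def dual {a b : ℝ} (P : TaggedPartition a b) : TaggedPartition a b where
  n := P.n + 1
  pts := fun i => if i = 0 then a else if i ≤ P.n then P.tag (i - 1) else b
  tag := fun i => if i ≤ P.n then P.pts i else b
  mono := by
    intro i
    rcases Nat.eq_zero_or_pos i with h0 | h0
    · subst h0
      simp only [Nat.zero_add, if_true]
      rw [if_neg one_ne_zero]
      by_cases h1 : 1 ≤ P.n
      · rw [if_pos h1]
        have := (P.tag_mem 0).1
        rw [P.first] at this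
        simpa using this
      · rw [if_neg h1]
        exact P.endpoints_le
    · have hne : i ≠ 0 := by omega
      have hne' : i + 1 ≠ 0 := by omega
      by_cases h1 : i + 1 ≤ P.n
      · rw [if_neg hne, if_neg hne', if_pos (by omega : i ≤ P.n), if_pos h1]
        have e : i + 1 - 1 = i - 1 + 1 := by omega
        rw [e]
        exact le_trans (P.tag_mem (i-1)).2 (by rw [← e, Nat.add_sub_cancel]; exact (P.tag_mem i).1)
      · by_cases h2 : i ≤ P.n
        · rw [if_neg hne, if_neg hne', if_pos h2, if_neg h1]
          calc P.tag (i - 1) ≤ P.pts (i - 1 + 1) := (P.tag_mem (i-1)).2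
            _ ≤ P.pts P.n := P.pts_mono (by omega)
            _ = b := P.last
        · rw [if_neg hne, if_neg hne', if_neg h2, if_neg h1]
  first := by simp
  last := by
    rw [if_neg (by omega : P.n + 1 ≠ 0), if_neg (by omega : ¬ P.n + 1 ≤ P.n)]
  tag_mem := by
    intro i
    rcases Nat.eq_zero_or_pos i with h0 | h0
    · subst h0
      simp only [Nat.zero_add, if_true]
      rw [if_pos (Nat.zero_le _), if_neg one_ne_zero, P.first]
      refine ⟨le_refl a, ?_⟩
      by_cases h1 : 1 ≤ P.n
      · rw [if_pos h1]
        have := (P.tag_mem 0).1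
        rw [P.first] at this
        simpa using this
      · rw [if_neg h1]
        exact P.endpoints_le
    · have hne : i ≠ 0 := by omega
      have hne' : i + 1 ≠ 0 := by omega
      by_cases h2 : i ≤ P.n
      · rw [if_neg hne, if_pos h2, if_pos h2, if_neg hne']
        constructor
        · have := (P.tag_mem (i-1)).2
          rwa [Nat.sub_add_cancel h0] at this
        · by_cases h1 : i + 1 ≤ P.n
          · rw [if_pos h1, Nat.add_sub_cancel]
            exact (P.tag_mem i).1
          · rw [if_neg h1]
            have hiP : i = P.n := by omega
            rw [hiP, P.last]
      · rw [if_neg hne, if_neg h2, if_neg hne', if_neg h2, if_neg (by omega : ¬ i + 1 ≤ P.n)]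
        exact ⟨le_refl b, le_refl b⟩

lemma dual_mesh {a b : ℝ} (P : TaggedPartition a b) {δ : ℝ} (hn : 0 < P.n)
    (h : ∀ i < P.n, P.pts (i + 1) - P.pts i < δ) :
    ∀ i < P.dual.n, P.dual.pts (i + 1) - P.dual.pts i < 2 * δ := by
  have hδ : 0 < δ := by
    have := h 0 hn
    have := P.mono 0
    linarith
  intro i hi
  simp only [dual] at hi ⊢
  rcases Nat.eq_zero_or_pos i with h0 | h0
  · subst h0
    simp only [Nat.zero_add, if_true]
    rw [if_neg one_ne_zero, if_pos (by omega : 1 ≤ P.n)]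
    have e : (1:ℕ) - 1 = 0 := rfl
    rw [e]
    have h1 := (P.tag_mem 0).2
    have h2 := h 0 hn
    have h3 : P.pts 0 = a := P.first
    linarith
  · have hne : i ≠ 0 := by omega
    have hne' : i + 1 ≠ 0 := by omega
    by_cases h1 : i + 1 ≤ P.n
    · rw [if_neg hne, if_neg hne', if_pos (by omega : i ≤ P.n), if_pos h1]
      have e : i + 1 - 1 = i - 1 + 1 := by omega
      rw [e]
      have ha1 := (P.tag_mem (i-1)).1
      have ha2 := (P.tag_mem (i-1+1)).2
      have hb1 := h (i-1) (by omega)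
      have hb2 := h (i-1+1) (by omega)
      have e2 : i - 1 + 1 + 1 = i + 1 := by omega
      linarith
    · have h2 : i = P.n := by omega
      rw [if_neg hne, if_neg hne', if_pos (by omega : i ≤ P.n), if_neg h1, h2]
      have ha1 := (P.tag_mem (P.n - 1)).1
      have hb1 := h (P.n - 1) (by omega)
      have e : P.n - 1 + 1 = P.n := by omega
      rw [e] at hb1
      have : P.pts P.n = b := P.last
      linarith

lemma RSsum_dual (f u : ℝ → ℝ) {a b : ℝ} (P : TaggedPartition a b) :
    RSsum u f P + RSsum f u P.dual = f b * u b - f a * u a := by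
  have hd : RSsum f u P.dual
      = (∑ i ∈ Finset.range P.n, f (P.pts i) * u (P.tag i) + f (P.pts P.n) * u b)
        - (∑ i ∈ Finset.range P.n, f (P.pts (i + 1)) * u (P.tag i) + f (P.pts 0) * u a) := by
    unfold RSsum dual
    dsimp only
    simp only [mul_sub]
    rw [Finset.sum_sub_distrib]
    congr 1
    · rw [Finset.sum_range_succ]
      congr 1
      · refine Finset.sum_congr rfl fun i hi => ?_
        have hi' : i < P.n := Finset.mem_range.1 hi
        rw [if_pos (by omega : i ≤ P.n), if_neg (by omega : i + 1 ≠ 0),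
          if_pos (by omega : i + 1 ≤ P.n), Nat.add_sub_cancel]
      · rw [if_pos (le_refl P.n), if_neg (by omega : P.n + 1 ≠ 0),
          if_neg (by omega : ¬ P.n + 1 ≤ P.n)]
    · rw [Finset.sum_range_succ']
      congr 1
      · refine Finset.sum_congr rfl fun i hi => ?_
        have hi' : i < P.n := Finset.mem_range.1 hi
        rw [if_pos (by omega : i + 1 ≤ P.n), if_neg (by omega : i + 1 ≠ 0),
          if_pos (by omega : i + 1 ≤ P.n), Nat.add_sub_cancel]
  rw [hd, P.first, P.last]
  unfold RSsum
  have : ∑ i ∈ Finset.range P.n, u (P.tag i) * (f (P.pts (i + 1)) - f (P.pts i))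
      = ∑ i ∈ Finset.range P.n, f (P.pts (i+1)) * u (P.tag i)
        - ∑ i ∈ Finset.range P.n, f (P.pts i) * u (P.tag i) := by
    rw [← Finset.sum_sub_distrib]
    exact Finset.sum_congr rfl fun i _ => by ring
  rw [this]
  ring

lemma RSsum_sub_const (u f : ℝ → ℝ) (c : ℝ) {a b : ℝ} (P : TaggedPartition a b) :
    RSsum (fun s => u s - c) f P = RSsum u f P - c * (f b - f a) := by
  have h1 : ∑ i ∈ Finset.range P.n, c * (f (P.pts (i + 1)) - f (P.pts i)) = c * (f b - f a) := by
    rw [← Finset.mul_sum, Finset.sum_range_sub (fun i => f (P.pts i)), P.first, P.last]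
  unfold RSsum
  rw [← h1, ← Finset.sum_sub_distrib]
  exact Finset.sum_congr rfl fun i _ => by ring

/-- Uniform partition with left-endpoint tags. -/
noncomputable def uniform (c d : ℝ) (h : c ≤ d) (n : ℕ) (hn : 0 < n) : TaggedPartition c d where
  n := n
  pts := fun i => c + (min i n : ℕ) * ((d - c) / n)
  tag := fun i => c + (min i n : ℕ) * ((d - c) / n)
  mono := by
    intro i
    have hq : 0 ≤ (d - c) / n := div_nonneg (by linarith) (Nat.cast_nonneg n)
    have hm : ((min i n : ℕ) : ℝ) ≤ ((min (i + 1) n : ℕ) : ℝ) := by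
      exact_mod_cast (by omega : min i n ≤ min (i + 1) n)
    nlinarith [mul_le_mul_of_nonneg_right hm hq]
  first := by simp
  last := by
    have hn' : (n : ℝ) ≠ 0 := Nat.cast_ne_zero.2 (by omega)
    simp only [min_self]
    field_simp
    ring
  tag_mem := by
    intro i
    refine ⟨le_refl _, ?_⟩
    have hq : 0 ≤ (d - c) / n := div_nonneg (by linarith) (Nat.cast_nonneg n)
    have hm : ((min i n : ℕ) : ℝ) ≤ ((min (i + 1) n : ℕ) : ℝ) := by
      exact_mod_cast (by omega : min i n ≤ min (i + 1) n)
    nlinarith [mul_le_mul_of_nonneg_right hm hq]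

lemma uniform_mesh (c d : ℝ) (h : c ≤ d) (n : ℕ) (hn : 0 < n) :
    ∀ i, (uniform c d h n hn).pts (i + 1) - (uniform c d h n hn).pts i ≤ (d - c) / n := by
  intro i
  simp only [uniform]
  have hq : 0 ≤ (d - c) / n := div_nonneg (by linarith) (Nat.cast_nonneg n)
  have hm : ((min (i + 1) n : ℕ) : ℝ) ≤ ((min i n : ℕ) : ℝ) + 1 := by
    exact_mod_cast (by omega : min (i + 1) n ≤ min i n + 1)
  nlinarith [mul_le_mul_of_nonneg_right hm hq]

end TaggedPartition

open TaggedPartition in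

theorem two_point_dual_identity
    (a b t0 x t1 I1 I2 I3 I4 : ℝ) (f u : ℝ → ℝ)
    (hax : a < x) (hxb : x < b) (ht0 : a ≤ t0) (ht01 : t0 ≤ t1) (ht1 : t1 ≤ b)
    (hI1 : IsRSIntegral (fun s => u s - u a) f a t0 I1)
    (hI2 : IsRSIntegral (fun s => u s - u x) f t0 t1 I2)
    (hI3 : IsRSIntegral (fun s => u s - u b) f t1 b I3)
    (hI4 : IsRSIntegral f u a b I4) :
    I1 + I2 + I3 = (u x - u a) * f t0 + (u b - u x) * f t1 - I4 := by
  by_contra hne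
  set D := I1 + I2 + I3 - ((u x - u a) * f t0 + (u b - u x) * f t1 - I4) with hDdef
  have hD : D ≠ 0 := sub_ne_zero_of_ne hne
  have hDpos : 0 < |D| := abs_pos.2 hD
  obtain ⟨δ1, hδ1, H1⟩ := hI1 (|D| / 4) (by positivity)
  obtain ⟨δ2, hδ2, H2⟩ := hI2 (|D| / 4) (by positivity)
  obtain ⟨δ3, hδ3, H3⟩ := hI3 (|D| / 4) (by positivity)
  obtain ⟨δ4, hδ4, H4⟩ := hI4 (|D| / 4) (by positivity)
  set δ := min (min δ1 δ2) (min δ3 (δ4 / 2)) with hδdef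
  have hδ : 0 < δ := lt_min (lt_min hδ1 hδ2) (lt_min hδ3 (by positivity))
  obtain ⟨N, hN⟩ := exists_nat_gt (max (max ((t0 - a) / δ) ((t1 - t0) / δ)) ((b - t1) / δ))
  have hN0 : 0 < N := by
    have h0 : (0:ℝ) ≤ (t0 - a) / δ := div_nonneg (by linarith) hδ.le
    have : (0:ℝ) < N := lt_of_le_of_lt (h0.trans ((le_max_left _ _).trans (le_max_left _ _))) hN
    exact_mod_cast this
  have hNr : (0:ℝ) < N := by exact_mod_cast hN0
  -- the three uniform partitions
  set P1 := uniform a t0 ht0 N hN0 with hP1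
  set P2 := uniform t0 t1 ht01 N hN0 with hP2
  set P3 := uniform t1 b ht1 N hN0 with hP3
  have m1 : ∀ i < P1.n, P1.pts (i + 1) - P1.pts i < δ := by
    intro i _
    refine lt_of_le_of_lt (uniform_mesh a t0 ht0 N hN0 i) ?_
    rw [div_lt_iff₀ hNr]
    have : (t0 - a) / δ < N := lt_of_le_of_lt ((le_max_left _ _).trans (le_max_left _ _)) hN
    rw [div_lt_iff₀ hδ] at this
    linarith
  have m2 : ∀ i < P2.n, P2.pts (i + 1) - P2.pts i < δ := by
    intro i _
    refine lt_of_le_of_lt (uniform_mesh t0 t1 ht01 N hN0 i) ?_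
    rw [div_lt_iff₀ hNr]
    have : (t1 - t0) / δ < N := lt_of_le_of_lt ((le_max_right _ _).trans (le_max_left _ _)) hN
    rw [div_lt_iff₀ hδ] at this
    linarith
  have m3 : ∀ i < P3.n, P3.pts (i + 1) - P3.pts i < δ := by
    intro i _
    refine lt_of_le_of_lt (uniform_mesh t1 b ht1 N hN0 i) ?_
    rw [div_lt_iff₀ hNr]
    have : (b - t1) / δ < N := lt_of_le_of_lt (le_max_right _ _) hN
    rw [div_lt_iff₀ hδ] at this
    linarith
  set Q := (P1.concat P2).concat P3 with hQ
  have mQ : ∀ i < Q.n, Q.pts (i + 1) - Q.pts i < δ :=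
    concat_mesh _ _ (concat_mesh _ _ m1 m2) m3
  have hQn : 0 < Q.n := by
    show 0 < N + N + N
    omega
  have mR : ∀ i < Q.dual.n, Q.dual.pts (i + 1) - Q.dual.pts i < δ4 := by
    intro i hi
    refine lt_of_lt_of_le (dual_mesh Q hQn mQ i hi) ?_
    have h1 : δ ≤ δ4 / 2 := (min_le_right _ _).trans (min_le_right _ _)
    linarith
  have hδ1' : δ ≤ δ1 := (min_le_left _ _).trans (min_le_left _ _)
  have hδ2' : δ ≤ δ2 := (min_le_left _ _).trans (min_le_right _ _)
  have hδ3' : δ ≤ δ3 := (min_le_right _ _).trans (min_le_left _ _)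
  have e1 := H1 P1 fun i hi => lt_of_lt_of_le (m1 i hi) hδ1'
  have e2 := H2 P2 fun i hi => lt_of_lt_of_le (m2 i hi) hδ2'
  have e3 := H3 P3 fun i hi => lt_of_lt_of_le (m3 i hi) hδ3'
  have e4 := H4 Q.dual mR
  -- algebraic identity between the sums
  have p1 := RSsum_sub_const u f (u a) P1
  have p2 := RSsum_sub_const u f (u x) P2
  have p3 := RSsum_sub_const u f (u b) P3
  have hsum : RSsum u f Q = RSsum u f P1 + RSsum u f P2 + RSsum u f P3 := by
    rw [hQ, RSsum_concat, RSsum_concat]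
  have hparts := RSsum_dual f u Q
  have key : RSsum (fun s => u s - u a) f P1 + RSsum (fun s => u s - u x) f P2
      + RSsum (fun s => u s - u b) f P3
      = (u x - u a) * f t0 + (u b - u x) * f t1 - RSsum f u Q.dual := by
    rw [p1, p2, p3]
    nlinarith [hsum, hparts]
  have hDeq : D = (I1 - RSsum (fun s => u s - u a) f P1)
      + (I2 - RSsum (fun s => u s - u x) f P2)
      + (I3 - RSsum (fun s => u s - u b) f P3)
      + (I4 - RSsum f u Q.dual) := by
    rw [hDdef]
    linarith [key]
  have habs : |D| ≤ |I1 - RSsum (fun s => u s - u a) f P1|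
      + |I2 - RSsum (fun s => u s - u x) f P2|
      + |I3 - RSsum (fun s => u s - u b) f P3|
      + |I4 - RSsum f u Q.dual| := by
    rw [hDeq]
    exact (abs_add_le _ _).trans (add_le_add_left (abs_add_three _ _ _) _)
  rw [abs_sub_comm I1 _] at habs
  rw [abs_sub_comm I2 _] at habs
  rw [abs_sub_comm I3 _] at habs
  rw [abs_sub_comm I4 _] at habs
  linarith
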